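/- Let (X,e,μ) be an NP_2-digital H-space. Then X_e, the connected component of e, is NP_2-contractible. -/

import Mathlib

/-- A digital image: a finite set with a reflexive, symmetric adjacency relation
(a finite reflexive graph). -/
structure DigImage where
  carrier : Type
  [fintype : Fintype carrier]
  adj : carrier → carrier → Prop
  adj_refl : ∀ x, adj x x
  adj_symm : ∀ {x y}, adj x y → adj y x

attribute [instance] DigImage.fintype

/-- `f : (X,κ) → (Y,λ)` is digitally continuous if it preserves adjacency. -/
def DigContinuous (X Y : DigImage) (f : X.carrier → Y.carrier) : Prop :=
  ∀ ⦃a b : X.carrier⦄, X.adj a b → Y.adj (f a) (f b)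

/-- The product of two digital images with the normal product adjacency `NP_i`
(for `i ≤ 1` this is `NP_1`; otherwise `NP_2`): two pairs are adjacent iff
their coordinates are adjacent in at most `i` positions and equal elsewhere. -/
def DigImage.prod (i : ℕ) (X Y : DigImage) : DigImage where
  carrier := X.carrier × Y.carrier
  adj p q :=
    if i ≤ 1 then (p.1 = q.1 ∧ Y.adj p.2 q.2) ∨ (p.2 = q.2 ∧ X.adj p.1 q.1)
    else X.adj p.1 q.1 ∧ Y.adj p.2 q.2
  adj_refl p := by
    split_ifs
    · exact Or.inl ⟨rfl, Y.adj_refl p.2⟩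
    · exact ⟨X.adj_refl p.1, Y.adj_refl p.2⟩
  adj_symm {p q} h := by
    split_ifs at h ⊢ with hi
    · rcases h with ⟨h1, h2⟩ | ⟨h1, h2⟩
      · exact Or.inl ⟨h1.symm, Y.adj_symm h2⟩
      · exact Or.inr ⟨h1.symm, X.adj_symm h2⟩
    · exact ⟨X.adj_symm h.1, Y.adj_symm h.2⟩

/-- The triple product of digital images with the normal product adjacency `NP_i`:
coordinates adjacent in at most `i` positions and equal in all other positions. -/
def DigImage.prod3 (i : ℕ) (X Y Z : DigImage) : DigImage where
  carrier := X.carrier × Y.carrier × Z.carrier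
  adj p q :=
    if i ≤ 1 then
      (p.1 = q.1 ∧ p.2.1 = q.2.1 ∧ Z.adj p.2.2 q.2.2) ∨
      (p.1 = q.1 ∧ p.2.2 = q.2.2 ∧ Y.adj p.2.1 q.2.1) ∨
      (p.2.1 = q.2.1 ∧ p.2.2 = q.2.2 ∧ X.adj p.1 q.1)
    else
      (p.1 = q.1 ∧ Y.adj p.2.1 q.2.1 ∧ Z.adj p.2.2 q.2.2) ∨
      (p.2.1 = q.2.1 ∧ X.adj p.1 q.1 ∧ Z.adj p.2.2 q.2.2) ∨
      (p.2.2 = q.2.2 ∧ X.adj p.1 q.1 ∧ Y.adj p.2.1 q.2.1)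
  adj_refl p := by
    split_ifs
    · exact Or.inl ⟨rfl, rfl, Z.adj_refl p.2.2⟩
    · exact Or.inl ⟨rfl, Y.adj_refl p.2.1, Z.adj_refl p.2.2⟩
  adj_symm {p q} h := by
    split_ifs at h ⊢ with hi
    · rcases h with ⟨h1, h2, h3⟩ | ⟨h1, h2, h3⟩ | ⟨h1, h2, h3⟩
      · exact Or.inl ⟨h1.symm, h2.symm, Z.adj_symm h3⟩
      · exact Or.inr (Or.inl ⟨h1.symm, h2.symm, Y.adj_symm h3⟩)
      · exact Or.inr (Or.inr ⟨h1.symm, h2.symm, X.adj_symm h3⟩)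
    · rcases h with ⟨h1, h2, h3⟩ | ⟨h1, h2, h3⟩ | ⟨h1, h2, h3⟩
      · exact Or.inl ⟨h1.symm, Y.adj_symm h2, Z.adj_symm h3⟩
      · exact Or.inr (Or.inl ⟨h1.symm, X.adj_symm h2, Z.adj_symm h3⟩)
      · exact Or.inr (Or.inr ⟨h1.symm, X.adj_symm h2, Y.adj_symm h3⟩)

/-- The digital interval `[0,m]_ℤ` with the standard adjacency `|a−b| ≤ 1`. -/
def digInterval (m : ℕ) : DigImage where
  carrier := Fin (m + 1)
  adj a b := |(a : ℤ) - (b : ℤ)| ≤ 1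
  adj_refl a := by simp
  adj_symm {a b} h := by
    have h' : |(a : ℤ) - (b : ℤ)| ≤ 1 := h
    rw [abs_sub_comm] at h'
    exact h'

/-- `f` and `g` are `NP_i`-digitally homotopic: there is an
`NP_i`-continuous `H : X × [0,m]_ℤ → Y` with `H(·,0) = f` and `H(·,m) = g`. -/
def DigHomotopic (i : ℕ) (X Y : DigImage) (f g : X.carrier → Y.carrier) : Prop :=
  ∃ (m : ℕ) (H : X.carrier × Fin (m + 1) → Y.carrier),
    DigContinuous (DigImage.prod i X (digInterval m)) Y H ∧
    (∀ x, H (x, 0) = f x) ∧ (∀ x, H (x, Fin.last m) = g x)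

/-- An `NP_i`-digital H-space `(X,e,μ)`. -/
structure IsHSpace (i : ℕ) (X : DigImage) (e : X.carrier)
    (μ : X.carrier × X.carrier → X.carrier) : Prop where
  continuous : DigContinuous (DigImage.prod i X X) X μ
  right_unit : DigHomotopic i X X (fun x => μ (x, e)) id
  left_unit : DigHomotopic i X X (fun x => μ (e, x)) id

/-- H-equivalence of `NP_i`-digital H-spaces. -/
def HSpaceEquiv (i : ℕ) (X : DigImage) (eX : X.carrier)
    (μX : X.carrier × X.carrier → X.carrier)
    (Y : DigImage) (eY : Y.carrier)
    (μY : Y.carrier × Y.carrier → Y.carrier) : Prop :=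
  ∃ (f : X.carrier → Y.carrier) (g : Y.carrier → X.carrier),
    DigContinuous X Y f ∧ DigContinuous Y X g ∧ f eX = eY ∧ g eY = eX ∧
    DigHomotopic i Y Y (f ∘ g) id ∧ DigHomotopic i X X (g ∘ f) id ∧
    DigHomotopic i (DigImage.prod i X X) Y (fun p => f (μX p)) (fun p => μY (f p.1, f p.2)) ∧
    DigHomotopic i (DigImage.prod i Y Y) X (fun p => g (μY p)) (fun p => μX (g p.1, g p.2))

/-- `NP_i`-homotopy equivalence of digital images. -/
def DigHtpyEquiv (i : ℕ) (X Y : DigImage) : Prop :=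
  ∃ (f : X.carrier → Y.carrier) (g : Y.carrier → X.carrier),
    DigContinuous X Y f ∧ DigContinuous Y X g ∧
    DigHomotopic i X X (g ∘ f) id ∧ DigHomotopic i Y Y (f ∘ g) id

/-- A digital image is `NP_i`-irreducible if it is not `NP_i`-homotopy
equivalent to any digital image with fewer points. -/
def DigIrreducible (i : ℕ) (X : DigImage) : Prop :=
  ¬ ∃ Y : DigImage, Fintype.card Y.carrier < Fintype.card X.carrier ∧ DigHtpyEquiv i X Y

/-- A digital image is connected if any two points are joined by a path
of consecutively adjacent points. -/
def DigConnected (X : DigImage) : Prop :=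
  ∀ a b : X.carrier, Relation.ReflTransGen X.adj a b

/-- A digital image is `NP_i`-contractible if the identity is `NP_i`-homotopic
to a constant map. -/
def DigContractible (i : ℕ) (X : DigImage) : Prop :=
  ∃ c : X.carrier, DigHomotopic i X X id (fun _ => c)

/-- An isomorphism of digital images: a continuous bijection with continuous inverse. -/
def IsDigIso (X Y : DigImage) (f : X.carrier → Y.carrier) : Prop :=
  DigContinuous X Y f ∧ ∃ g : Y.carrier → X.carrier,
    DigContinuous Y X g ∧ Function.LeftInverse g f ∧ Function.RightInverse g f

/-- The sub-digital-image on the points satisfying `P`, with the induced adjacency. -/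
noncomputable def subImage (X : DigImage) (P : X.carrier → Prop) : DigImage where
  carrier := {x : X.carrier // P x}
  fintype := Fintype.ofFinite _
  adj a b := X.adj a.1 b.1
  adj_refl a := X.adj_refl a.1
  adj_symm h := X.adj_symm h

/-- The connected component of `e`, as a digital image. -/
noncomputable def componentImage (X : DigImage) (e : X.carrier) : DigImage :=
  subImage X (fun x => Relation.ReflTransGen X.adj e x)

/-- Homotopy-associativity of an `NP_i`-digital multiplication:
`μ∘(id × μ) ≃ᵢ μ∘(μ × id)` as maps `X × X × X → X` with `NP_i` adjacency. -/
def HomotopyAssociative (i : ℕ) (X : DigImage)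
    (μ : X.carrier × X.carrier → X.carrier) : Prop :=
  DigHomotopic i (DigImage.prod3 i X X X) X
    (fun p => μ (p.1, μ (p.2.1, p.2.2)))
    (fun p => μ (μ (p.1, p.2.1), p.2.2))

/-- `α` is a left homotopy-inverse for the H-space `(X,e,μ)`. -/
def LeftHtpyInverse (i : ℕ) (X : DigImage) (e : X.carrier)
    (μ : X.carrier × X.carrier → X.carrier) (α : X.carrier → X.carrier) : Prop :=
  DigContinuous X X α ∧ DigContinuous X X (fun x => μ (α x, x)) ∧
  DigHomotopic i X X (fun x => μ (α x, x)) (fun _ => e)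

/-- `β` is a right homotopy-inverse for the H-space `(X,e,μ)`. -/
def RightHtpyInverse (i : ℕ) (X : DigImage) (e : X.carrier)
    (μ : X.carrier × X.carrier → X.carrier) (β : X.carrier → X.carrier) : Prop :=
  DigContinuous X X β ∧ DigContinuous X X (fun x => μ (x, β x)) ∧
  DigHomotopic i X X (fun x => μ (x, β x)) (fun _ => e)

namespace NP2Aux

lemma adj_prod2 (X Y : DigImage) (p q : (DigImage.prod 2 X Y).carrier) :
    (DigImage.prod 2 X Y).adj p q ↔ X.adj p.1 q.1 ∧ Y.adj p.2 q.2 := by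
  have : (DigImage.prod 2 X Y).adj p q =
      if (2:ℕ) ≤ 1 then (p.1 = q.1 ∧ Y.adj p.2 q.2) ∨ (p.2 = q.2 ∧ X.adj p.1 q.1)
      else X.adj p.1 q.1 ∧ Y.adj p.2 q.2 := rfl
  rw [this]
  norm_num

lemma adj_interval {m : ℕ} (t t' : Fin (m+1)) :
    (digInterval m).adj t t' ↔ t'.val = t.val ∨ t'.val = t.val + 1 ∨ t.val = t'.val + 1 := by
  show |(t : ℤ) - (t' : ℤ)| ≤ 1 ↔ _
  rw [abs_le]
  omega

/-- One-step homotopy condition. -/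
def Step (X Y : DigImage) (f g : X.carrier → Y.carrier) : Prop :=
  ∀ ⦃a b⦄, X.adj a b → Y.adj (f a) (g b)

lemma Step.symm {X Y : DigImage} {f g : X.carrier → Y.carrier} (h : Step X Y f g) :
    Step X Y g f := fun a b hab => Y.adj_symm (h (X.adj_symm hab))

/-- A chain of one-step homotopies (equivalent to NP₂-homotopy). -/
def HChain (X Y : DigImage) (f g : X.carrier → Y.carrier) : Prop :=
  ∃ (n : ℕ) (F : ℕ → X.carrier → Y.carrier), F 0 = f ∧ F n = g ∧
    (∀ k, k ≤ n → DigContinuous X Y (F k)) ∧ (∀ k, k < n → Step X Y (F k) (F (k+1)))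

lemma HChain.refl {X Y : DigImage} {f : X.carrier → Y.carrier}
    (hf : DigContinuous X Y f) : HChain X Y f f :=
  ⟨0, fun _ => f, rfl, rfl, fun _ _ => hf, fun k hk => absurd hk (Nat.not_lt_zero k)⟩

lemma HChain.single {X Y : DigImage} {f g : X.carrier → Y.carrier}
    (hf : DigContinuous X Y f) (hg : DigContinuous X Y g) (h : Step X Y f g) :
    HChain X Y f g := by
  refine ⟨1, fun k => if k = 0 then f else g, by simp, by simp, ?_, ?_⟩
  · intro k _
    by_cases hk : k = 0 <;> simp [hk, hf, hg]
  · intro k hk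
    interval_cases k
    simpa using h

lemma HChain.symm {X Y : DigImage} {f g : X.carrier → Y.carrier}
    (h : HChain X Y f g) : HChain X Y g f := by
  obtain ⟨n, F, h0, hn, hc, hs⟩ := h
  refine ⟨n, fun k => F (n - k), by simpa, by simpa, ?_, ?_⟩
  · intro k _
    exact hc _ (Nat.sub_le _ _)
  · intro k hk
    have h1 : n - k = (n - (k+1)) + 1 := by omega
    show Step X Y (F (n - k)) (F (n - (k+1)))
    rw [h1]
    exact (hs _ (by omega)).symm

lemma HChain.trans {X Y : DigImage} {f g h : X.carrier → Y.carrier}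
    (h1 : HChain X Y f g) (h2 : HChain X Y g h) : HChain X Y f h := by
  obtain ⟨n, F, hF0, hFn, hFc, hFs⟩ := h1
  obtain ⟨m, G, hG0, hGm, hGc, hGs⟩ := h2
  refine ⟨n + m, fun k => if k ≤ n then F k else G (k - n), by simp [hF0], ?_, ?_, ?_⟩
  · by_cases hm : m = 0
    · subst hm
      simp only [Nat.add_zero, le_refl, if_pos, hFn, ← hG0, ← hGm]
    · have hnm : ¬ (n + m ≤ n) := by omega
      simp only [if_neg hnm, Nat.add_sub_cancel_left, hGm]
  · intro k _
    by_cases hk : k ≤ n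
    · simpa [hk] using hFc k hk
    · simpa [hk] using hGc (k - n) (by omega)
  · intro k hk
    by_cases hk1 : k + 1 ≤ n
    · simp only [if_pos (by omega : k ≤ n), if_pos hk1]
      exact hFs k (by omega)
    · by_cases hk2 : k ≤ n
      · have hkn : k = n := by omega
        subst hkn
        simp only [if_pos le_rfl, if_neg hk1, Nat.add_sub_cancel_left, hFn, ← hG0]
        exact hGs 0 (by omega)
      · simp only [if_neg hk2, if_neg hk1]
        have : k + 1 - n = (k - n) + 1 := by omega
        rw [this]
        exact hGs (k - n) (by omega)

end NP2Aux
namespace NP2Aux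

lemma HChain.comp_left {X Y Z : DigImage} {f g : X.carrier → Y.carrier}
    (h : HChain X Y f g) {φ : Y.carrier → Z.carrier} (hφ : DigContinuous Y Z φ) :
    HChain X Z (φ ∘ f) (φ ∘ g) := by
  obtain ⟨n, F, h0, hn, hc, hs⟩ := h
  exact ⟨n, fun k => φ ∘ F k, by simp only [h0], by simp only [hn],
    fun k hk a b hab => hφ (hc k hk hab),
    fun k hk a b hab => hφ (hs k hk hab)⟩

lemma HChain.comp_right {X Y Z : DigImage} {f g : Y.carrier → Z.carrier}
    (h : HChain Y Z f g) {ψ : X.carrier → Y.carrier} (hψ : DigContinuous X Y ψ) :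
    HChain X Z (f ∘ ψ) (g ∘ ψ) := by
  obtain ⟨n, F, h0, hn, hc, hs⟩ := h
  exact ⟨n, fun k => F k ∘ ψ, by simp only [h0], by simp only [hn],
    fun k hk a b hab => hc k hk (hψ hab),
    fun k hk a b hab => hs k hk (hψ hab)⟩

lemma HChain.toHomotopic {X Y : DigImage} {f g : X.carrier → Y.carrier}
    (h : HChain X Y f g) : DigHomotopic 2 X Y f g := by
  obtain ⟨n, F, h0, hn, hc, hs⟩ := h
  refine ⟨n, fun p => F p.2.val p.1, ?_, ?_, ?_⟩
  · rintro ⟨x, t⟩ ⟨x', t'⟩ hadj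
    replace hadj := (adj_prod2 X (digInterval n) (x, t) (x', t')).mp hadj
    dsimp only at hadj
    obtain ⟨hx, ht⟩ := hadj
    replace hx : X.adj x x' := hx
    replace ht := (adj_interval (m := n) t t').mp ht
    show Y.adj (F t.val x) (F t'.val x')
    obtain ⟨tv, htv⟩ : ∃ tv, tv = t.val := ⟨t.val, rfl⟩
    obtain ⟨tv', htv'⟩ : ∃ tv', tv' = t'.val := ⟨t'.val, rfl⟩
    have hlt : tv < n + 1 := htv ▸ t.isLt
    have hlt' : tv' < n + 1 := htv' ▸ t'.isLt
    rw [← htv, ← htv'] at ht ⊢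
    rcases ht with h1 | h1 | h1
    · rw [h1]
      exact hc tv (by omega) hx
    · rw [h1]
      exact hs tv (by omega) hx
    · rw [h1]
      exact Y.adj_symm (hs tv' (by omega) (X.adj_symm hx))
  · intro x
    show F (0 : Fin (n+1)).val x = f x
    rw [Fin.val_zero, h0]
  · intro x
    show F (Fin.last n).val x = g x
    rw [Fin.val_last, hn]

lemma HChain.ofHomotopic {X Y : DigImage} {f g : X.carrier → Y.carrier}
    (h : DigHomotopic 2 X Y f g) : HChain X Y f g := by
  obtain ⟨m, H, hc, h0, hm⟩ := h
  refine ⟨m, fun k x => H (x, ⟨min k m, Nat.lt_succ_of_le (Nat.min_le_right k m)⟩),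
    ?_, ?_, ?_, ?_⟩
  · funext x
    show H (x, ⟨min 0 m, Nat.lt_succ_of_le (Nat.min_le_right 0 m)⟩) = f x
    rw [← h0 x]
    have : (⟨min 0 m, Nat.lt_succ_of_le (Nat.min_le_right 0 m)⟩ : Fin (m+1)) = 0 :=
      Fin.ext (by simp)
    rw [this]
  · funext x
    show H (x, ⟨min m m, Nat.lt_succ_of_le (Nat.min_le_right m m)⟩) = g x
    rw [← hm x]
    have : (⟨min m m, Nat.lt_succ_of_le (Nat.min_le_right m m)⟩ : Fin (m+1)) = Fin.last m :=
      Fin.ext (by simp [Fin.val_last])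
    rw [this]
  · intro k _ a b hab
    refine hc ?_
    refine (adj_prod2 _ _ _ _).mpr ?_
    refine ⟨hab, ?_⟩
    rw [adj_interval]
    left; rfl
  · intro k hk a b hab
    refine hc ?_
    refine (adj_prod2 _ _ _ _).mpr ?_
    refine ⟨hab, ?_⟩
    rw [adj_interval]
    right; left
    show min (k+1) m = min k m + 1
    omega

lemma HChain.cont_left {X Y : DigImage} {f g : X.carrier → Y.carrier}
    (h : HChain X Y f g) : DigContinuous X Y f := by
  obtain ⟨n, F, h0, hn, hc, hs⟩ := h
  rw [← h0]; exact hc 0 (by omega)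

lemma HChain.cont_right {X Y : DigImage} {f g : X.carrier → Y.carrier}
    (h : HChain X Y f g) : DigContinuous X Y g := by
  obtain ⟨n, F, h0, hn, hc, hs⟩ := h
  rw [← hn]; exact hc n le_rfl

/-- The track of a chain is a path. -/
lemma HChain.track {X Y : DigImage} {f g : X.carrier → Y.carrier}
    (h : HChain X Y f g) (x : X.carrier) : Relation.ReflTransGen Y.adj (f x) (g x) := by
  obtain ⟨n, F, h0, hn, hc, hs⟩ := h
  rw [← h0, ← hn]
  clear h0 hn
  induction n with
  | zero => exact Relation.ReflTransGen.refl
  | succ n ih =>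
    exact (ih (fun k hk => hc k (by omega)) (fun k hk => hs k (by omega))).tail
      (hs n (by omega) (X.adj_refl x))

lemma rtg_symm {X : DigImage} {a b : X.carrier}
    (h : Relation.ReflTransGen X.adj a b) : Relation.ReflTransGen X.adj b a := by
  induction h with
  | refl => exact Relation.ReflTransGen.refl
  | tail _ hadj ih =>
    exact (Relation.ReflTransGen.single (X.adj_symm hadj)).trans ih

lemma cont_iterate {X : DigImage} {f : X.carrier → X.carrier}
    (hf : DigContinuous X X f) (k : ℕ) : DigContinuous X X f^[k] := by
  induction k with
  | zero => exact fun a b hab => hab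
  | succ k ih =>
    rw [Function.iterate_succ]
    exact fun a b hab => ih (hf hab)

lemma hchain_id_iterate {X : DigImage} {f : X.carrier → X.carrier}
    (h : HChain X X id f) (k : ℕ) : HChain X X id f^[k] := by
  induction k with
  | zero => exact HChain.refl (fun a b hab => hab)
  | succ k ih =>
    have h2 := ih.comp_right (ψ := f) h.cont_right
    rw [Function.iterate_succ]
    exact h.trans h2

lemma iterate_eventually_periodic {α : Type} [Finite α] (f : α → α) :
    ∃ a p, 0 < p ∧ ∀ x, a ≤ x → f^[x + p] = f^[x] := by
  obtain ⟨a, b, hne, hab⟩ := Finite.exists_ne_map_eq_of_infinite (fun k : ℕ => f^[k])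
  obtain ⟨c, d, hcd, hab'⟩ : ∃ c d : ℕ, c < d ∧ f^[c] = f^[d] := by
    rcases Nat.lt_or_ge a b with h | h
    · exact ⟨a, b, h, hab⟩
    · exact ⟨b, a, by omega, hab.symm⟩
  clear hab hne
  refine ⟨c, d - c, by omega, ?_⟩
  intro x hx
  have e1 : x + (d - c) = (x - c) + d := by omega
  have e2 : (x - c) + c = x := by omega
  calc f^[x + (d - c)] = f^[(x - c) + d] := by rw [e1]
    _ = f^[x - c] ∘ f^[d] := Function.iterate_add f _ _
    _ = f^[x - c] ∘ f^[c] := by rw [← hab']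
    _ = f^[(x - c) + c] := (Function.iterate_add f _ _).symm
    _ = f^[x] := by rw [e2]

/-- pigeonhole: some positive iterate is idempotent. -/
lemma exists_idempotent_iterate {α : Type} [Finite α] (f : α → α) :
    ∃ m, 0 < m ∧ f^[m] ∘ f^[m] = f^[m] := by
  obtain ⟨a, p, hp, hper⟩ := iterate_eventually_periodic f
  have hstep : ∀ t x, a ≤ x → f^[x + t * p] = f^[x] := by
    intro t
    induction t with
    | zero => intro x _; simp
    | succ t ih =>
      intro x hx
      have : x + (t+1) * p = (x + t * p) + p := by ring
      rw [this, hper _ (by omega), ih x hx]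
  refine ⟨(a + 1) * p, by positivity, ?_⟩
  rw [← Function.iterate_add]
  have : (a+1) * p + (a+1) * p = (a+1)*p + ((a+1)*p/p) * p := by
    rw [Nat.mul_div_cancel _ hp]
  rw [this, hstep _ _ (by nlinarith)]

/-- a surjective continuous self-map has an iterate equal to the identity. -/
lemma exists_iterate_eq_id {α : Type} [Finite α] (f : α → α) (hs : Function.Surjective f) :
    ∃ k, 0 < k ∧ f^[k] = id := by
  have hinj : Function.Injective f := Finite.injective_iff_surjective.mpr hs
  obtain ⟨a, p, hp, hper⟩ := iterate_eventually_periodic f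
  refine ⟨p, hp, ?_⟩
  have key : f^[a + p] = f^[a] := hper a le_rfl
  have hinja : Function.Injective f^[a] := Function.Injective.iterate hinj a
  funext x
  apply hinja
  have : f^[a] (f^[p] x) = f^[a + p] x := by
    rw [Function.iterate_add]
    rfl
  rw [this, key]
  rfl

end NP2Aux
namespace NP2Aux

/-- Strong (NP₂) continuity of a multiplication. -/
def SCont (X : DigImage) (μ : X.carrier × X.carrier → X.carrier) : Prop :=
  ∀ ⦃a b a' b'⦄, X.adj a a' → X.adj b b' → X.adj (μ (a, b)) (μ (a', b'))

lemma hchain_of_rtg {X Y : DigImage} {α : Type*} {r : α → α → Prop}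
    (Φ : α → X.carrier → Y.carrier)
    (h1 : ∀ c, DigContinuous X Y (Φ c))
    (h2 : ∀ c c', r c c' → Step X Y (Φ c) (Φ c'))
    {a a' : α} (h : Relation.ReflTransGen r a a') : HChain X Y (Φ a) (Φ a') := by
  induction h with
  | refl => exact HChain.refl (h1 a)
  | tail hprev hadj ih => exact ih.trans (HChain.single (h1 _) (h1 _) (h2 _ _ hadj))

lemma exists_neighbor {X : DigImage} {a b : X.carrier}
    (h : Relation.ReflTransGen X.adj a b) : a = b ∨ ∃ z, X.adj a z ∧ z ≠ a := by
  induction h using Relation.ReflTransGen.head_induction_on with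
  | refl => exact Or.inl rfl
  | head hadj htail ih =>
    classical
    rename_i a' c
    by_cases hac : c = a'
    · subst hac
      rcases ih with h | h
      · exact Or.inl h
      · exact Or.inr h
    · exact Or.inr ⟨c, hadj, hac⟩

lemma main_induction : ∀ (n : ℕ) (X : DigImage), Fintype.card X.carrier ≤ n →
    DigConnected X →
    ∀ (e : X.carrier) (μ : X.carrier × X.carrier → X.carrier), SCont X μ →
    HChain X X (fun x => μ (e, x)) id → HChain X X (fun x => μ (x, e)) id →
    ∃ c, HChain X X id (fun _ => c) := by
  intro n
  induction n with
  | zero =>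
    intro X hcard _ e _ _ _ _
    exact absurd hcard (by
      have : 0 < Fintype.card X.carrier := Fintype.card_pos_iff.mpr ⟨e⟩
      omega)
  | succ n ih =>
    intro X hcard hconn e μ hμ hL hR
    classical
    by_cases hsmall : Fintype.card X.carrier ≤ 1
    · refine ⟨e, ?_⟩
      have hss : Subsingleton X.carrier := Fintype.card_le_one_iff_subsingleton.mp hsmall
      have hid : (id : X.carrier → X.carrier) = fun _ => e :=
        funext fun x => Subsingleton.elim x e
      rw [← hid]
      exact HChain.refl (fun a b hab => hab)
    · have hRcont : DigContinuous X X (fun x => μ (x, e)) :=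
        fun a b hab => hμ hab (X.adj_refl e)
      have hLcont : DigContinuous X X (fun x => μ (e, x)) :=
        fun a b hab => hμ (X.adj_refl e) hab
      -- Step 1: produce a non-surjective map chain-homotopic to the identity.
      obtain ⟨f, hfc, hfch, hfns⟩ :
          ∃ f, DigContinuous X X f ∧ HChain X X id f ∧ ¬ Function.Surjective f := by
        by_cases hsL : Function.Surjective (fun x => μ (e, x))
        case neg => exact ⟨_, hLcont, hL.symm, hsL⟩
        obtain ⟨n₁, hn₁, hLiter⟩ := exists_iterate_eq_id _ hsL
        set L : X.carrier → X.carrier := fun x => μ (e, x) with hLdef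
        set L' : X.carrier → X.carrier := L^[n₁ - 1] with hL'def
        have hL'c : DigContinuous X X L' := cont_iterate hLcont _
        have hLL' : ∀ y, L' (L y) = y := by
          intro y
          have h1 : L^[(n₁ - 1) + 1] y = y := by
            rw [show n₁ - 1 + 1 = n₁ by omega, hLiter]; rfl
          rw [Function.iterate_add_apply] at h1
          simpa using h1
        have hchainL' : HChain X X id L' := hchain_id_iterate hL.symm _
        set μ₁ : X.carrier × X.carrier → X.carrier := fun p => L' (μ p) with hμ₁def
        have hμ₁S : SCont X μ₁ := fun a b a' b' h1 h2 => hL'c (hμ h1 h2)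
        have hμ₁L : ∀ y, μ₁ (e, y) = y := fun y => hLL' y
        set R₁ : X.carrier → X.carrier := fun x => μ₁ (x, e) with hR₁def
        have hR₁c : DigContinuous X X R₁ := fun a b hab => hμ₁S hab (X.adj_refl e)
        have hR₁e : R₁ e = e := hμ₁L e
        have hchainR₁ : HChain X X id R₁ := by
          have h1 : HChain X X (L' ∘ (fun x => μ (x, e))) (L' ∘ id) := hR.comp_left hL'c
          have h2 : HChain X X R₁ L' := h1
          exact hchainL'.trans h2.symm
        by_cases hsR : Function.Surjective R₁
        case neg => exact ⟨R₁, hR₁c, hchainR₁, hsR⟩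
        obtain ⟨n₂, hn₂, hRiter⟩ := exists_iterate_eq_id _ hsR
        set R' : X.carrier → X.carrier := R₁^[n₂ - 1] with hR'def
        have hR'c : DigContinuous X X R' := cont_iterate hR₁c _
        have hRR' : ∀ y, R₁ (R' y) = y := by
          intro y
          have h1 : R₁^[1 + (n₂ - 1)] y = y := by
            rw [show 1 + (n₂ - 1) = n₂ by omega, hRiter]; rfl
          rw [Function.iterate_add_apply] at h1
          simpa using h1
        have hR'e : R' e = e := Function.iterate_fixed hR₁e _
        set μ₂ : X.carrier × X.carrier → X.carrier := fun p => μ₁ (R' p.1, p.2) with hμ₂def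
        have hμ₂S : SCont X μ₂ := fun a b a' b' h1 h2 => hμ₁S (hR'c h1) h2
        have hμ₂L : ∀ y, μ₂ (e, y) = y := by
          intro y
          show μ₁ (R' e, y) = y
          rw [hR'e]
          exact hμ₁L y
        have hμ₂R : ∀ x, μ₂ (x, e) = x := fun x => hRR' x
        have hclq : ∀ x y, X.adj e x → X.adj e y → X.adj x y := by
          intro x y hx hy
          have h1 := hμ₂S (X.adj_symm hx) hy
          rwa [hμ₂R x, hμ₂L y] at h1
        have h2card : 1 < Fintype.card X.carrier := by omega
        obtain ⟨x₀, hx₀⟩ := Fintype.exists_ne_of_one_lt_card h2card e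
        rcases exists_neighbor (hconn e x₀) with heq | ⟨z, hz, hzne⟩
        · exact absurd heq.symm hx₀
        · set r : X.carrier → X.carrier := fun x => if x = e then z else x with hrdef
          have hrc : DigContinuous X X r := by
            intro a b hab
            show X.adj (if a = e then z else a) (if b = e then z else b)
            by_cases ha : a = e <;> by_cases hb : b = e
            · rw [if_pos ha, if_pos hb]; exact X.adj_refl z
            · rw [if_pos ha, if_neg hb]
              exact hclq z b hz (ha ▸ hab)
            · rw [if_neg ha, if_pos hb]
              exact hclq a z (X.adj_symm (hb ▸ hab)) hz
            · rw [if_neg ha, if_neg hb]; exact hab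
          have hstep : Step X X id r := by
            intro a b hab
            show X.adj a (if b = e then z else b)
            by_cases hb : b = e
            · rw [if_pos hb]
              exact hclq a z (X.adj_symm (hb ▸ hab)) hz
            · rw [if_neg hb]
              exact hab
          have hrns : ¬ Function.Surjective r := by
            intro hsurj
            obtain ⟨x, hx⟩ := hsurj e
            by_cases hxe : x = e
            · rw [hrdef] at hx
              simp only [hxe, if_pos] at hx
              exact hzne hx
            · rw [hrdef] at hx
              simp only [if_neg hxe] at hx
              exact hxe hx
          exact ⟨r, hrc, HChain.single (fun a b hab => hab) hrc hstep, hrns⟩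
      -- Step 2: idempotent iterate with smaller image.
      obtain ⟨m, hm, hmid⟩ := exists_idempotent_iterate f
      set g : X.carrier → X.carrier := f^[m] with hgdef
      have hgc : DigContinuous X X g := cont_iterate hfc m
      have hgg : ∀ x, g (g x) = g x := fun x => congrFun hmid x
      have hchain_g : HChain X X id g := hchain_id_iterate hfch m
      obtain ⟨w, hw⟩ : ∃ w, ∀ x, f x ≠ w := by
        rw [Function.Surjective] at hfns
        push_neg at hfns
        obtain ⟨w, hw⟩ := hfns
        exact ⟨w, fun x hx => hw x hx⟩
      have hwg : ∀ x, g x ≠ w := by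
        intro x
        rw [hgdef, show m = (m - 1) + 1 by omega, Function.iterate_succ_apply']
        exact hw _
      set P : X.carrier → Prop := fun x => x ∈ Set.range g with hPdef
      set B : DigImage := subImage X P with hBdef
      have hcardB : Fintype.card B.carrier < Fintype.card X.carrier := by
        rw [Fintype.card_eq_nat_card, Fintype.card_eq_nat_card]
        refine Finite.card_subtype_lt (p := P) (x := w) ?_
        rintro ⟨x, hx⟩
        exact hwg x hx
      have hPg : ∀ x, P (g x) := fun x => ⟨x, rfl⟩
      set gB : X.carrier → B.carrier := fun x => ⟨g x, hPg x⟩ with hgBdef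
      set ι : B.carrier → X.carrier := fun b => b.val with hιdef
      have hgBc : DigContinuous X B gB := fun a b hab => hgc hab
      have hιc : DigContinuous B X ι := fun a b hab => hab
      have hgBι : ∀ b, gB (ι b) = b := by
        rintro ⟨v, x, hx⟩
        apply Subtype.ext
        show g v = v
        rw [← hx, hgg]
      have hconnB : DigConnected B := by
        intro a b
        have h1 : Relation.ReflTransGen X.adj (ι a) (ι b) := hconn _ _
        have h2 : Relation.ReflTransGen B.adj (gB (ι a)) (gB (ι b)) :=
          h1.lift gB (fun x y hxy => hgBc hxy)
        rwa [hgBι, hgBι] at h2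
      set eB : B.carrier := gB e with heBdef
      set μB : B.carrier × B.carrier → B.carrier := fun p => gB (μ (ι p.1, ι p.2)) with hμBdef
      have hμBS : SCont B μB := fun a b a' b' h1 h2 => hgBc (hμ h1 h2)
      have hpath : Relation.ReflTransGen X.adj e (g e) := hchain_g.track e
      have hcompι : ((gB ∘ id) ∘ ι) = (id : B.carrier → B.carrier) := funext fun b => hgBι b
      have hunitL : HChain B B (fun b => μB (eB, b)) id := by
        have hslide : HChain B B (fun b => gB (μ (g e, ι b))) (fun b => gB (μ (e, ι b))) :=
          hchain_of_rtg (fun c => fun b => gB (μ (c, ι b)))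
            (fun c a b hab => hgBc (hμ (X.adj_refl c) hab))
            (fun c c' hcc => fun a b hab => hgBc (hμ hcc hab))
            (rtg_symm hpath)
        have hmain : HChain B B (fun b => gB (μ (e, ι b))) id := by
          have h3 := (hL.comp_left hgBc).comp_right hιc
          rwa [hcompι] at h3
        exact hslide.trans hmain
      have hunitR : HChain B B (fun b => μB (b, eB)) id := by
        have hslide : HChain B B (fun b => gB (μ (ι b, g e))) (fun b => gB (μ (ι b, e))) :=
          hchain_of_rtg (fun c => fun b => gB (μ (ι b, c)))
            (fun c a b hab => hgBc (hμ hab (X.adj_refl c)))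
            (fun c c' hcc => fun a b hab => hgBc (hμ hab hcc))
            (rtg_symm hpath)
        have hmain : HChain B B (fun b => gB (μ (ι b, e))) id := by
          have h3 := (hR.comp_left hgBc).comp_right hιc
          rwa [hcompι] at h3
        exact hslide.trans hmain
      obtain ⟨c, hc⟩ := ih B (by omega) hconnB eB μB hμBS hunitL hunitR
      refine ⟨ι c, ?_⟩
      have h1 : HChain X X ((ι ∘ id) ∘ gB) ((ι ∘ fun _ => c) ∘ gB) :=
        (hc.comp_left hιc).comp_right hgBc
      have h2 : HChain X X g (fun _ => ι c) := h1
      exact hchain_g.trans h2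

end NP2Aux
namespace NP2Aux

/-- Restrict a chain ending at the identity to a connectivity-closed subimage. -/
lemma hchain_restrict {X : DigImage} {P : X.carrier → Prop}
    (hP : ∀ x y, P x → Relation.ReflTransGen X.adj x y → P y)
    {f : X.carrier → X.carrier} (h : HChain X X f id)
    (hf : ∀ x, P x → P (f x)) :
    HChain (subImage X P) (subImage X P)
      (fun b => ⟨f b.val, hf _ b.2⟩) id := by
  obtain ⟨n, F, h0, hn, hc, hs⟩ := h
  have htrack : ∀ x k, k ≤ n → Relation.ReflTransGen X.adj (F k x) x := by
    intro x k hk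
    have haux : ∀ j, k + j ≤ n → Relation.ReflTransGen X.adj (F k x) (F (k + j) x) := by
      intro j
      induction j with
      | zero => intro _; exact Relation.ReflTransGen.refl
      | succ j ihj =>
        intro hj
        exact (ihj (by omega)).tail (hs _ (by omega) (X.adj_refl x))
    have h2 := haux (n - k) (by omega)
    rw [show k + (n - k) = n by omega, hn] at h2
    exact h2
  have hmem : ∀ k, k ≤ n → ∀ x, P x → P (F k x) := by
    intro k hk x hx
    exact hP x _ hx (rtg_symm (htrack x k hk))
  refine ⟨n, fun k b => ⟨F (min k n) b.val, hmem _ (Nat.min_le_right k n) b.val b.2⟩,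
    ?_, ?_, ?_, ?_⟩
  · funext b
    apply Subtype.ext
    show F (min 0 n) b.val = f b.val
    rw [Nat.zero_min, h0]
  · funext b
    apply Subtype.ext
    show F (min n n) b.val = b.val
    rw [Nat.min_self, hn]
    rfl
  · intro k _ a b hab
    exact hc _ (Nat.min_le_right k n) hab
  · intro k hk a b hab
    show X.adj (F (min k n) a.val) (F (min (k + 1) n) b.val)
    rw [show min k n = k by omega, show min (k + 1) n = k + 1 by omega]
    exact hs k hk hab

lemma rtg_component {X : DigImage} {e : X.carrier} {v : X.carrier}
    (h : Relation.ReflTransGen X.adj e v) :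
    Relation.ReflTransGen (componentImage X e).adj
      ⟨e, Relation.ReflTransGen.refl⟩ ⟨v, h⟩ := by
  induction h with
  | refl => exact Relation.ReflTransGen.refl
  | tail hb hbc ih => exact ih.tail hbc

end NP2Aux
open NP2Aux

/-- In an `NP_2`-digital H-space `(X,e,μ)`, the connected
component of `e` is `NP_2`-contractible. -/
theorem np2_component_contractible (X : DigImage) (e : X.carrier)
    (μ : X.carrier × X.carrier → X.carrier) (h : IsHSpace 2 X e μ) :
    DigContractible 2 (componentImage X e) := by
  classical
  have hS : SCont X μ := fun a b a' b' h1 h2 =>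
    h.continuous ((adj_prod2 X X (a, b) (a', b')).mpr ⟨h1, h2⟩)
  have cL : HChain X X (fun x => μ (e, x)) id := HChain.ofHomotopic h.left_unit
  have cR : HChain X X (fun x => μ (x, e)) id := HChain.ofHomotopic h.right_unit
  set P : X.carrier → Prop := fun x => Relation.ReflTransGen X.adj e x with hPdef
  have hP : ∀ x y, P x → Relation.ReflTransGen X.adj x y → P y :=
    fun x y hx hxy => hx.trans hxy
  -- the component is closed under μ with one argument in it and e in the other
  have htrL : ∀ b, Relation.ReflTransGen X.adj (μ (e, b)) b := fun b => cL.track b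
  have hclosed : ∀ a b, P a → P b → P (μ (a, b)) := by
    intro a b ha hb
    have h1 : Relation.ReflTransGen X.adj e (μ (e, b)) :=
      hb.trans (rtg_symm (htrL b))
    have h2 : Relation.ReflTransGen X.adj (μ (e, b)) (μ (a, b)) :=
      ha.lift (fun c => μ (c, b))
        (fun x y hxy => hS hxy (X.adj_refl b))
    exact h1.trans h2
  set X' : DigImage := componentImage X e with hX'def
  set e' : X'.carrier := ⟨e, Relation.ReflTransGen.refl⟩ with he'def
  set μ' : X'.carrier × X'.carrier → X'.carrier :=
    fun p => ⟨μ (p.1.val, p.2.val), hclosed _ _ p.1.2 p.2.2⟩ with hμ'def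
  have hS' : SCont X' μ' := fun a b a' b' h1 h2 => hS h1 h2
  have hconn' : DigConnected X' := by
    rintro ⟨va, ha⟩ ⟨vb, hb⟩
    exact (rtg_symm (rtg_component ha)).trans (rtg_component hb)
  have hfL : ∀ x, P x → P (μ (e, x)) := fun x hx =>
    hclosed e x Relation.ReflTransGen.refl hx
  have hfR : ∀ x, P x → P (μ (x, e)) := fun x hx =>
    hclosed x e hx Relation.ReflTransGen.refl
  have chainL : HChain X' X' (fun b => μ' (e', b)) id := by
    have h1 := hchain_restrict hP cL hfL
    have h2 : (fun b : X'.carrier => μ' (e', b)) =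
        (fun b : X'.carrier => (⟨μ (e, b.val), hfL _ b.2⟩ : X'.carrier)) :=
      funext fun b => Subtype.ext rfl
    rw [h2]
    exact h1
  have chainR : HChain X' X' (fun b => μ' (b, e')) id := by
    have h1 := hchain_restrict hP cR hfR
    have h2 : (fun b : X'.carrier => μ' (b, e')) =
        (fun b : X'.carrier => (⟨μ (b.val, e), hfR _ b.2⟩ : X'.carrier)) :=
      funext fun b => Subtype.ext rfl
    rw [h2]
    exact h1
  obtain ⟨c, hc⟩ := main_induction (Fintype.card X'.carrier) X' le_rfl hconn' e' μ'
    hS' chainL chainR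
  exact ⟨c, hc.toHomotopic⟩
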